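/- The product ∏_{j=1}^{N} ((j−1)!·(M−N+j)!)/((L−N+j−1)!·(M−L+j)!) equals the MacMahon product PL(N, L−N, M−L+1) = ∏_{i=1}^{N} ∏_{j=1}^{L−N} ∏_{k=1}^{M−L+1} (i+j+k−1)/(i+j+k−2), for integers M ≥ L > N ≥ 1. -/

import Mathlib

open Finset

private lemma tele (a : ℕ) : ∀ K : ℕ,
    ∏ k ∈ Finset.Icc 1 K, (((a : ℚ) + k + 1) / ((a : ℚ) + k)) = ((a : ℚ) + K + 1) / ((a : ℚ) + 1)
  | 0 => by simp; exact (div_self (by positivity)).symm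
  | (K + 1) => by
    rw [Finset.prod_Icc_succ_top (Nat.succ_le_succ (Nat.zero_le K)), tele a K]
    have h1 : (a : ℚ) + 1 ≠ 0 := by positivity
    have h2 : (a : ℚ) + (K + 1 : ℕ) ≠ 0 := by push_cast; positivity
    push_cast at h2 ⊢
    field_simp
    ring

private lemma asc (c : ℕ) : ∀ J : ℕ,
    ∏ j ∈ Finset.Icc 1 J, ((c : ℚ) + j) = ((c + J).factorial : ℚ) / (c.factorial : ℚ)
  | 0 => by simp; exact (div_self (Nat.cast_ne_zero.mpr c.factorial_ne_zero)).symm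
  | (J + 1) => by
    rw [Finset.prod_Icc_succ_top (Nat.succ_le_succ (Nat.zero_le J)), asc c J]
    have h1 : (c.factorial : ℚ) ≠ 0 := Nat.cast_ne_zero.mpr c.factorial_ne_zero
    have h2 : c + (J + 1) = (c + J) + 1 := by ring
    rw [h2, Nat.factorial_succ]
    push_cast
    field_simp
    ring

private lemma key (a b c : ℕ) :
    ∏ j ∈ Finset.Icc 1 (b + 1), ∏ k ∈ Finset.Icc 1 (c + 1),
        (((a : ℚ) + 1) + j + k - 1) / (((a : ℚ) + 1) + j + k - 2)
      = ((a.factorial : ℚ) * ((a + b + c + 2).factorial : ℚ)) /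
        (((a + b + 1).factorial : ℚ) * ((a + c + 1).factorial : ℚ)) := by
  have step1 : ∀ j ∈ Finset.Icc 1 (b + 1),
      ∏ k ∈ Finset.Icc 1 (c + 1),
          (((a : ℚ) + 1) + j + k - 1) / (((a : ℚ) + 1) + j + k - 2)
        = (((a + c + 1 : ℕ) : ℚ) + j) / (((a : ℕ) : ℚ) + j) := by
    intro j hj
    have hj1 : 1 ≤ j := (Finset.mem_Icc.mp hj).1
    have := tele (a + j - 1) (c + 1)
    have hcast : ((a + j - 1 : ℕ) : ℚ) = (a : ℚ) + j - 1 := by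
      have : a + j - 1 + 1 = a + j := by omega
      have := congrArg (fun n : ℕ => (n : ℚ)) this
      push_cast at this
      linarith
    rw [hcast] at this
    calc ∏ k ∈ Finset.Icc 1 (c + 1),
            (((a : ℚ) + 1) + j + k - 1) / (((a : ℚ) + 1) + j + k - 2)
        = ∏ k ∈ Finset.Icc 1 (c + 1),
            (((a : ℚ) + j - 1) + k + 1) / (((a : ℚ) + j - 1) + k) := by
          apply Finset.prod_congr rfl
          intro k _
          ring_nf
      _ = ((a : ℚ) + j - 1 + (c + 1 : ℕ) + 1) / ((a : ℚ) + j - 1 + 1) := this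
      _ = (((a + c + 1 : ℕ) : ℚ) + j) / (((a : ℕ) : ℚ) + j) := by push_cast; ring_nf
  rw [Finset.prod_congr rfl step1, Finset.prod_div_distrib, asc (a + c + 1) (b + 1), asc a (b + 1)]
  have e1 : a + c + 1 + (b + 1) = a + b + c + 2 := by ring
  have e2 : a + (b + 1) = a + b + 1 := by ring
  rw [e1, e2]
  have n1 : ((a + b + c + 2).factorial : ℚ) ≠ 0 := Nat.cast_ne_zero.mpr (Nat.factorial_ne_zero _)
  have n2 : ((a + c + 1).factorial : ℚ) ≠ 0 := Nat.cast_ne_zero.mpr (Nat.factorial_ne_zero _)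
  have n3 : ((a + b + 1).factorial : ℚ) ≠ 0 := Nat.cast_ne_zero.mpr (Nat.factorial_ne_zero _)
  have n4 : ((a).factorial : ℚ) ≠ 0 := Nat.cast_ne_zero.mpr (Nat.factorial_ne_zero _)
  field_simp

/-- For integers `M ≥ L > N ≥ 1`, the product
`∏_{j=1}^{N} (j-1)! (M-N+j)! / ((L-N+j-1)! (M-L+j)!)` equals MacMahon's product
`PL(N, L-N, M-L+1) = ∏_{i=1}^{N} ∏_{j=1}^{L-N} ∏_{k=1}^{M-L+1} (i+j+k-1)/(i+j+k-2)`. -/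
theorem factorial_product_eq_macmahon (L M N : ℕ) (hN : 1 ≤ N) (hNL : N < L) (hLM : L ≤ M) :
    (∏ j ∈ Finset.Icc 1 N,
        ((Nat.factorial (j - 1) : ℚ) * (Nat.factorial (M - N + j) : ℚ)) /
          ((Nat.factorial (L - N + j - 1) : ℚ) * (Nat.factorial (M - L + j) : ℚ)))
      = ∏ i ∈ Finset.Icc 1 N, ∏ j ∈ Finset.Icc 1 (L - N), ∏ k ∈ Finset.Icc 1 (M - L + 1),
          ((i : ℚ) + j + k - 1) / ((i : ℚ) + j + k - 2) := by
  obtain ⟨b, rfl⟩ : ∃ b, L = N + b + 1 := ⟨L - N - 1, by omega⟩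
  obtain ⟨c, rfl⟩ : ∃ c, M = N + b + 1 + c := ⟨M - (N + b + 1), by omega⟩
  have hJ : N + b + 1 - N = b + 1 := by omega
  have hK : N + b + 1 + c - (N + b + 1) + 1 = c + 1 := by omega
  have hKj : ∀ j : ℕ, N + b + 1 + c - (N + b + 1) + j = c + j := fun j => by omega
  have hMN : ∀ j : ℕ, N + b + 1 + c - N + j = b + 1 + c + j := fun j => by omega
  have hLN : ∀ j : ℕ, b + 1 + j - 1 = b + j := fun j => by omega
  simp only [hJ, hK, hKj, hMN, hLN]
  apply Finset.prod_congr rfl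
  intro i hi
  have hi1 : 1 ≤ i := (Finset.mem_Icc.mp hi).1
  obtain ⟨a, rfl⟩ : ∃ a, i = a + 1 := ⟨i - 1, by omega⟩
  have := key a b c
  have e1 : b + 1 + c + (a + 1) = a + b + c + 2 := by ring
  have e2 : b + (a + 1) = a + b + 1 := by ring
  have e3 : c + (a + 1) = a + c + 1 := by ring
  have e4 : a + 1 - 1 = a := by omega
  rw [e1, e2, e3, e4]
  rw [← this]
  apply Finset.prod_congr rfl
  intro j _
  apply Finset.prod_congr rfl
  intro k _
  push_cast
  ring_nf
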